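/- For all non-negative integers n, p, q, k with p ≥ n: ∑_{j=0}^{p} (-1)^{n-j} * C(j+q, q) * C(n+k+q+j, k) * C(n+k+p+q+1, p-j) * S(j+n+q+1, j+q+1) = C(n+k+q, q) * s(n+k, k), where s denotes the unsigned Stirling number of the first kind and S the Stirling number of the second kind. -/

import Mathlib

/-- The unsigned `r`-Stirling number of the first kind. -/
def rStirling1 (r : ℕ) : ℕ → ℕ → ℕ
  | 0, k => if r = 0 ∧ k = 0 then 1 else 0
  | n + 1, k =>
    if n + 1 < r then 0
    else if n + 1 = r then (if k = r then 1 else 0)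
    else (if k = 0 then 0 else rStirling1 r n (k - 1)) + n * rStirling1 r n k

/-- The `r`-Stirling number of the second kind. -/
def rStirling2 (r : ℕ) : ℕ → ℕ → ℕ
  | 0, k => if r = 0 ∧ k = 0 then 1 else 0
  | n + 1, k =>
    if n + 1 < r then 0
    else if n + 1 = r then (if k = r then 1 else 0)
    else (if k = 0 then 0 else rStirling2 r n (k - 1)) + k * rStirling2 r n k

/-- The unsigned Stirling number of the first kind. -/
def stirling1 (n k : ℕ) : ℕ := rStirling1 0 n k

/-- The Stirling number of the second kind. -/
def stirling2 (n k : ℕ) : ℕ := rStirling2 0 n k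

open Polynomial Finset

lemma stirling2_succ (n k : ℕ) :
    stirling2 (n+1) k = (if k = 0 then 0 else stirling2 n (k-1)) + k * stirling2 n k := by
  simp [stirling2, rStirling2]

lemma stirling1_succ (n k : ℕ) :
    stirling1 (n+1) k = (if k = 0 then 0 else stirling1 n (k-1)) + n * stirling1 n k := by
  simp [stirling1, rStirling1]

lemma stirling2_zero_of_lt : ∀ n k : ℕ, n < k → stirling2 n k = 0 := by
  intro n
  induction n with
  | zero => intro k hk; simp [stirling2, rStirling2]; omega
  | succ n ih =>
    intro k hk
    rw [stirling2_succ, if_neg (by omega), ih (k-1) (by omega), ih k (by omega)]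
    ring

lemma stirling1_zero_of_lt : ∀ n k : ℕ, n < k → stirling1 n k = 0 := by
  intro n
  induction n with
  | zero => intro k hk; simp [stirling1, rStirling1]; omega
  | succ n ih =>
    intro k hk
    rw [stirling1_succ, if_neg (by omega), ih (k-1) (by omega), ih k (by omega)]
    ring

lemma stirling2_diag : ∀ x : ℕ, stirling2 x x = 1 := by
  intro x
  induction x with
  | zero => simp [stirling2, rStirling2]
  | succ x ih =>
    rw [stirling2_succ, if_neg (by omega), Nat.add_sub_cancel, ih,
      stirling2_zero_of_lt x (x+1) (by omega)]
    ring

lemma stirling1_diag : ∀ x : ℕ, stirling1 x x = 1 := by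
  intro x
  induction x with
  | zero => simp [stirling1, rStirling1]
  | succ x ih =>
    rw [stirling1_succ, if_neg (by omega), Nat.add_sub_cancel, ih,
      stirling1_zero_of_lt x (x+1) (by omega)]
    ring

lemma stirling2_zero (n : ℕ) : stirling2 (n+1) 0 = 0 := by
  rw [stirling2_succ]; simp

lemma stirling1_zero : ∀ n : ℕ, stirling1 (n+1) 0 = 0 := by
  intro n
  induction n with
  | zero => rw [stirling1_succ]; simp [stirling1, rStirling1]
  | succ n ih => rw [stirling1_succ]; simp [ih]



/-- Antidifference of a polynomial exists. -/
lemma exists_antidiff : ∀ (m : ℕ) (p : ℚ[X]), p.natDegree ≤ m →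
    ∃ q : ℚ[X], q.comp (X + 1) - q = p ∧ q.natDegree ≤ m + 1 ∧ q.eval 0 = 0 := by
  intro m
  induction m with
  | zero =>
    intro p hp
    refine ⟨C (p.coeff 0) * X, ?_, ?_, by simp⟩
    · rw [eq_C_of_natDegree_le_zero hp]
      simp [mul_add]
    · exact le_trans (natDegree_mul_le) (by simp)
  | succ m ih =>
    intro p hp
    set c := p.coeff (m+1) with hc
    set t : ℚ[X] := C (c / (m+2)) * X^(m+2) with ht
    have hm2 : ((m:ℚ)+2) ≠ 0 := by positivity
    have hdt : t.comp (X + 1) - t = C (c/(m+2)) * ((X+1)^(m+2) - X^(m+2)) := by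
      rw [ht]; rw [mul_sub]; simp
    have hdeg : (p - (t.comp (X + 1) - t)).natDegree ≤ m := by
      rw [natDegree_le_iff_coeff_eq_zero]
      intro j hj
      rw [coeff_sub, hdt, coeff_C_mul, coeff_sub, coeff_X_add_one_pow, coeff_X_pow]
      rcases eq_or_lt_of_le (Nat.succ_le_of_lt hj) with h1 | h1
      · rw [← h1]
        rw [if_neg (by omega), Nat.choose_succ_self_right]
        field_simp
        rw [← hc]; push_cast; ring
      · rw [coeff_eq_zero_of_natDegree_lt (lt_of_le_of_lt hp h1)]
        rcases eq_or_lt_of_le (Nat.succ_le_of_lt h1) with h2 | h2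
        · rw [← h2, if_pos rfl, Nat.choose_self]
          simp
        · rw [if_neg (by omega), Nat.choose_eq_zero_of_lt (by omega)]
          simp
    obtain ⟨q', hq1, hq2, hq3⟩ := ih _ hdeg
    refine ⟨t + q', ?_, ?_, ?_⟩
    · rw [add_comp]
      have : t.comp (X+1) + q'.comp (X+1) - (t + q') =
          (t.comp (X+1) - t) + (q'.comp (X+1) - q') := by ring
      rw [this, hq1]; ring
    · refine le_trans (natDegree_add_le _ _) (max_le ?_ (by omega))
      exact le_trans natDegree_mul_le (by simp)
    · simp [ht, hq3]

lemma antidiff_ex (p : ℚ[X]) : ∃ q : ℚ[X],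
    q.comp (X + 1) - q = p ∧ q.natDegree ≤ p.natDegree + 1 ∧ q.eval 0 = 0 :=
  exists_antidiff p.natDegree p le_rfl

noncomputable def sig : ℕ → ℚ[X]
  | 0 => 1
  | (n+1) => (antidiff_ex ((X + 1) * (sig n).comp (X + 1))).choose

lemma sig_zero : sig 0 = 1 := rfl

lemma sig_succ_spec (n : ℕ) :
    (sig (n+1)).comp (X + 1) - sig (n+1) = (X + 1) * (sig n).comp (X + 1) ∧
    (sig (n+1)).natDegree ≤ ((X + 1) * (sig n).comp (X + 1)).natDegree + 1 ∧
    (sig (n+1)).eval 0 = 0 := by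
  have : sig (n+1) = (antidiff_ex ((X + 1) * (sig n).comp (X + 1))).choose := by
    rw [sig]
  rw [this]
  exact (antidiff_ex _).choose_spec

lemma sig_eval_zero (n : ℕ) : (sig (n+1)).eval 0 = 0 := (sig_succ_spec n).2.2

lemma natDegree_X_add_one : ((X : ℚ[X]) + 1).natDegree = 1 := by
  simpa using natDegree_X_add_C (1:ℚ)

lemma sig_natDegree : ∀ n : ℕ, (sig n).natDegree ≤ 2 * n := by
  intro n
  induction n with
  | zero => simp [sig_zero]
  | succ n ih =>
    refine le_trans (sig_succ_spec n).2.1 ?_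
    have h1 : ((X + 1) * (sig n).comp (X + 1) : ℚ[X]).natDegree ≤ 1 + 2*n := by
      refine le_trans natDegree_mul_le ?_
      have := natDegree_comp_le (p := sig n) (q := (X + 1 : ℚ[X]))
      rw [natDegree_X_add_one] at *
      omega
    omega

lemma sig_eval_diff (n : ℕ) (x : ℚ) :
    (sig (n+1)).eval (x + 1) - (sig (n+1)).eval x = (x + 1) * (sig n).eval (x + 1) := by
  have h := congrArg (Polynomial.eval x) (sig_succ_spec n).1
  simpa [eval_comp] using h

lemma sig_eval_nat : ∀ n x : ℕ, (sig n).eval (x:ℚ) = stirling2 (x+n) x := by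
  intro n
  induction n with
  | zero => intro x; simp [sig_zero, stirling2_diag]
  | succ n ih =>
    intro x
    induction x with
    | zero => simpa [stirling2_zero] using sig_eval_zero n
    | succ x ihx =>
      have hd := sig_eval_diff n (x:ℚ)
      have h1 : ((x:ℚ) + 1) = ((x+1 : ℕ) : ℚ) := by push_cast; ring
      rw [h1] at hd
      have h2 : (sig (n+1)).eval ((x+1:ℕ):ℚ)
          = (sig (n+1)).eval (x:ℚ) + ((x+1:ℕ):ℚ) * (sig n).eval ((x+1:ℕ):ℚ) := by
        linarith [hd]
      rw [h2, ihx, ih (x+1)]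
      have hrec : stirling2 (x+1+(n+1)) (x+1)
          = stirling2 (x+n+1) x + (x+1) * stirling2 (x+1+n) (x+1) := by
        have := stirling2_succ (x+n+1) (x+1)
        rw [if_neg (by omega), Nat.add_sub_cancel] at this
        rw [show x+1+(n+1) = x+n+1+1 by omega, this, show x+1+n = x+n+1 by omega]
      rw [hrec]
      push_cast
      ring

lemma sig_root : ∀ n : ℕ, ∀ m : ℕ, m ≤ n + 1 → (sig (n+1)).eval (-(m:ℚ)) = 0 := by
  intro n
  induction n with
  | zero =>
    intro m hm
    interval_cases m
    · simpa using sig_eval_zero 0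
    · have hd := sig_eval_diff 0 (-1 : ℚ)
      have h0 := sig_eval_zero 0
      simp only [sig_zero, eval_one] at hd
      have : (sig 1).eval (-1 + 1) - (sig 1).eval (-1) = 0 := by rw [hd]; ring
      simp only [neg_add_cancel] at this
      push_cast
      linarith [h0]
  | succ n ih =>
    intro m
    induction m with
    | zero => intro _; simpa using sig_eval_zero (n+1)
    | succ m ihm =>
      intro hm
      have h1 : (sig (n+2)).eval (-(m:ℚ)) = 0 := ihm (by omega)
      have h2 : (sig (n+1)).eval (-(m:ℚ)) = 0 := ih m (by omega)
      have hd := sig_eval_diff (n+1) (-(m:ℚ) - 1)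
      have e1 : (-(m:ℚ) - 1 + 1) = -(m:ℚ) := by ring
      rw [e1] at hd
      have e2 : (-((m:ℕ)+1:ℕ) : ℚ) = -(m:ℚ) - 1 := by push_cast; ring
      rw [e2]
      rw [h1, h2, mul_zero] at hd
      linarith [hd]

lemma sig_eval_neg : ∀ n x : ℕ, (sig n).eval (-(x:ℚ) - n) = stirling1 (x+n) x := by
  intro n
  induction n with
  | zero =>
    intro x
    simp [sig_zero, stirling1_diag]
  | succ n ih =>
    intro x
    induction x with
    | zero =>
      have hroot := sig_root n (n+1) le_rfl
      rw [show (0:ℕ)+(n+1) = n+1 by omega, stirling1_zero]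
      have e : (-((0:ℕ):ℚ) - ((n+1:ℕ):ℚ)) = -(((n+1:ℕ)):ℚ) := by push_cast; ring
      rw [e, hroot]
      simp
    | succ x ihx =>
      push_cast at ihx ⊢
      have hd := sig_eval_diff n (-((x:ℚ)+1) - ((n:ℚ)+1))
      have e1 : (-((x:ℚ)+1) - ((n:ℚ)+1) + 1) = -(x:ℚ) - ((n:ℚ)+1) := by ring
      rw [e1, ihx] at hd
      have hIH2 : (sig n).eval (-(x:ℚ) - ((n:ℚ)+1)) = stirling1 (x+1+n) (x+1) := by
        have h2 := ih (x+1)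
        push_cast at h2
        rw [show (-(x:ℚ) - ((n:ℚ)+1)) = -((x:ℚ)+1) - (n:ℚ) by ring]
        exact h2
      rw [hIH2] at hd
      have hrec : stirling1 (x+1+(n+1)) (x+1)
          = stirling1 (x+(n+1)) x + (x+n+1) * stirling1 (x+1+n) (x+1) := by
        have h3 := stirling1_succ (x+n+1) (x+1)
        rw [if_neg (by omega), Nat.add_sub_cancel] at h3
        rw [show x+1+(n+1) = x+n+1+1 by omega, h3,
          show x+(n+1) = x+n+1 by omega, show x+1+n = x+n+1 by omega]
      rw [hrec]
      push_cast
      linarith [hd]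

open fwdDiff in
lemma fwdDiff_poly (P : ℚ[X]) :
    Δ_[(1:ℤ)] (fun t : ℤ => P.eval (t:ℚ)) = fun t : ℤ => (P.comp (X + 1) - P).eval (t:ℚ) := by
  funext t
  simp only [fwdDiff, eval_sub, eval_comp, eval_add, eval_X, eval_one]
  push_cast
  ring

lemma natDegree_delta_le (P : ℚ[X]) (m : ℕ) (h : P.natDegree ≤ m + 1) :
    (P.comp (X + 1) - P).natDegree ≤ m := by
  by_cases h0 : P.natDegree = 0
  · rw [eq_C_of_natDegree_le_zero h0.le]
    simp
  · have hc : (P.comp (X + 1)).natDegree = P.natDegree := by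
      rw [natDegree_comp, natDegree_X_add_one, mul_one]
    have hP0 : P ≠ 0 := fun h' => h0 (by simp [h'])
    have hcomp0 : P.comp (X + 1) ≠ 0 := fun h' => by
      rw [h', natDegree_zero] at hc; exact h0 hc.symm
    have hdeq : (P.comp (X + 1)).degree = P.degree := by
      rw [degree_eq_natDegree hcomp0, degree_eq_natDegree hP0, hc]
    have hlt : (P.comp (X + 1) - P).degree < P.degree := by
      rw [← hdeq]
      apply degree_sub_lt hdeq hcomp0
      rw [leadingCoeff_comp (by rw [natDegree_X_add_one]; omega)]
      have h1 : ((X:ℚ[X]) + 1).leadingCoeff = 1 := by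
        simpa using (monic_X_add_C (1:ℚ)).leadingCoeff
      rw [h1, one_pow, mul_one]
    by_cases hz : P.comp (X + 1) - P = 0
    · rw [hz, natDegree_zero]; exact Nat.zero_le m
    · have := natDegree_lt_natDegree hz hlt
      omega

open fwdDiff in
lemma kill : ∀ (d : ℕ) (P : ℚ[X]), P.natDegree ≤ d →
    (Δ_[(1:ℤ)])^[d+1] (fun t : ℤ => P.eval (t:ℚ)) = 0 := by
  intro d
  induction d with
  | zero =>
    intro P hP
    rw [Function.iterate_one, fwdDiff_poly, eq_C_of_natDegree_le_zero hP]
    funext t; simp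
  | succ d ih =>
    intro P hP
    rw [Function.iterate_succ_apply, fwdDiff_poly]
    exact ih _ (natDegree_delta_le P d hP)

open fwdDiff in
lemma kill_sum (N : ℕ) (P : ℚ[X]) (h : P.natDegree < N) (y : ℤ) :
    ∑ i ∈ range (N+1), (-1:ℚ)^(N-i) * (N.choose i) * P.eval ((y:ℚ) + i) = 0 := by
  obtain ⟨d, rfl⟩ : ∃ d, N = d + 1 := ⟨N-1, by omega⟩
  have h0 := congrFun (kill d P (by omega)) y
  rw [fwdDiff_iter_eq_sum_shift] at h0
  simp only [Pi.zero_apply] at h0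
  rw [← h0]
  apply Finset.sum_congr rfl
  intro i _
  rw [zsmul_eq_mul, show y + i • (1:ℤ) = y + i by simp]
  push_cast
  ring

lemma kill_sum' (N : ℕ) (P : ℚ[X]) (h : P.natDegree < N) (y : ℤ) :
    ∑ i ∈ range (N+1), (-1:ℚ)^i * (N.choose i) * P.eval ((y:ℚ) - i) = 0 := by
  have h0 := kill_sum N P h (y - N)
  rw [← Finset.sum_range_reflect] at h0
  rw [← h0]
  apply Finset.sum_congr rfl
  intro i hi
  rw [Finset.mem_range] at hi
  have hiN : i ≤ N := by omega
  rw [show N + 1 - 1 - i = N - i by omega]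
  rw [show N - (N - i) = i by omega, Nat.choose_symm hiN]
  have : ((y - (N:ℤ) : ℤ) : ℚ) + ((N - i : ℕ) : ℚ) = (y:ℚ) - i := by
    push_cast [Nat.cast_sub hiN]
    ring
  rw [this]

lemma nat_fact_choose (a q : ℕ) :
    (q+1).factorial * (a+q+1).choose (q+1) = (q.factorial * (a+q).choose q) * (a+q+1) := by
  have h := Nat.add_one_mul_choose_eq (a+q) q
  calc (q+1).factorial * (a+q+1).choose (q+1)
      = q.factorial * ((a+q+1).choose (q+1) * (q+1)) := by
        rw [Nat.factorial_succ]; ring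
    _ = q.factorial * ((a+q).succ * (a+q).choose q) := by rw [← h]
    _ = (q.factorial * (a+q).choose q) * (a+q+1) := by
        rw [Nat.succ_eq_add_one]; ring

lemma prod_cast (a : ℕ) : ∀ q : ℕ, ∏ i ∈ range q, ((a:ℚ) + i + 1)
    = (q.factorial * (a+q).choose q : ℕ) := by
  intro q
  induction q with
  | zero => simp
  | succ q ih =>
    rw [Finset.prod_range_succ, ih]
    rw [show a + (q+1) = a + q + 1 by omega, nat_fact_choose a q]
    push_cast
    ring

theorem stirling_mixed_identity' (n p q k : ℕ) (hp : n ≤ p) :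
    ∑ j ∈ Finset.range (p + 1),
      (-1 : ℤ) ^ (n + j) * ((j + q).choose q) * ((n + k + q + j).choose k) *
        ((n + k + p + q + 1).choose (p - j)) * stirling2 (j + n + q + 1) (j + q + 1)
    = ((n + k + q).choose q : ℤ) * stirling1 (n + k) k := by
  set N := n + k + p + q + 1 with hN
  set B : ℚ[X] := ∏ i ∈ range q, (X + C ((i:ℚ)+1)) with hB
  set G : ℚ[X] := ∏ i ∈ range k, (X + C ((n:ℚ)+q+i+1)) with hG
  set Sg : ℚ[X] := (sig n).comp (X + C ((q:ℚ)+1)) with hSg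
  set A : ℚ[X] := B * G * Sg with hA
  -- degree bound
  have hdegB : B.natDegree ≤ q := by
    refine le_trans (natDegree_prod_le _ _) ?_
    refine le_trans (Finset.sum_le_sum (fun i _ => (natDegree_X_add_C ((i:ℚ)+1)).le)) ?_
    simp
  have hdegG : G.natDegree ≤ k := by
    refine le_trans (natDegree_prod_le _ _) ?_
    refine le_trans (Finset.sum_le_sum (fun i _ => (natDegree_X_add_C ((n:ℚ)+q+i+1)).le)) ?_
    simp
  have hdegSg : Sg.natDegree ≤ 2*n := by
    refine le_trans natDegree_comp_le ?_
    rw [natDegree_X_add_C]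
    simpa using sig_natDegree n
  have hdegA : A.natDegree < N := by
    have h1 : A.natDegree ≤ B.natDegree + G.natDegree + Sg.natDegree :=
      le_trans natDegree_mul_le (by
        have := natDegree_mul_le (p := B) (q := G)
        omega)
    omega
  -- evaluation at naturals
  have hBnat : ∀ j : ℕ, B.eval (j:ℚ) = ((q.factorial * (j+q).choose q : ℕ) : ℚ) := by
    intro j
    rw [hB, eval_prod, ← prod_cast j q]
    apply Finset.prod_congr rfl
    intro i _
    simp only [eval_add, eval_X, eval_C]
    ring
  have hGnat : ∀ j : ℕ, G.eval (j:ℚ) = ((k.factorial * (n+k+q+j).choose k : ℕ) : ℚ) := by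
    intro j
    rw [hG, eval_prod, show n+k+q+j = (j+n+q)+k by omega, ← prod_cast (j+n+q) k]
    apply Finset.prod_congr rfl
    intro i _
    simp only [eval_add, eval_X, eval_C]
    push_cast
    ring
  have hSgnat : ∀ j : ℕ, Sg.eval (j:ℚ) = (stirling2 (j+n+q+1) (j+q+1) : ℚ) := by
    intro j
    rw [hSg, eval_comp]
    simp only [eval_add, eval_X, eval_C]
    rw [show ((j:ℚ) + ((q:ℚ)+1)) = ((j+q+1 : ℕ) : ℚ) by push_cast; ring,
      sig_eval_nat n (j+q+1), show j+q+1+n = j+n+q+1 by omega]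
  have hAnat : ∀ j : ℕ, A.eval (j:ℚ)
      = ((q.factorial * k.factorial : ℕ) : ℚ) * (((j+q).choose q : ℚ) *
        ((n+k+q+j).choose k : ℚ) * (stirling2 (j+n+q+1) (j+q+1) : ℚ)) := by
    intro j
    rw [hA, eval_mul, eval_mul, hBnat, hGnat, hSgnat]
    push_cast
    ring
  -- vanishing on the strip
  have hzero : ∀ m : ℕ, 1 ≤ m → m ≤ n + k + q → A.eval (-(m:ℚ)) = 0 := by
    intro m h1 h2
    rw [hA, eval_mul, eval_mul]
    by_cases hq : m ≤ q
    · have hB0 : B.eval (-(m:ℚ)) = 0 := by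
        rw [hB, eval_prod]
        apply Finset.prod_eq_zero (Finset.mem_range.mpr (show m-1 < q by omega))
        simp only [eval_add, eval_X, eval_C]
        rw [show ((m-1:ℕ):ℚ) = (m:ℚ) - 1 by push_cast [Nat.cast_sub h1]; ring]
        ring
      rw [hB0]; ring
    · by_cases hg : n + q + 1 ≤ m
      · have hG0 : G.eval (-(m:ℚ)) = 0 := by
          rw [hG, eval_prod]
          apply Finset.prod_eq_zero (Finset.mem_range.mpr (show m-(n+q+1) < k by omega))
          simp only [eval_add, eval_X, eval_C]
          rw [show ((m-(n+q+1):ℕ):ℚ) = (m:ℚ) - (n+q+1) by push_cast [Nat.cast_sub hg]; ring]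
          push_cast
          ring
        rw [hG0]; ring
      · -- q+1 ≤ m ≤ n+q, so n ≥ 1
        obtain ⟨n', rfl⟩ : ∃ n', n = n'+1 := ⟨n-1, by omega⟩
        have hS0 : Sg.eval (-(m:ℚ)) = 0 := by
          rw [hSg, eval_comp]
          simp only [eval_add, eval_X, eval_C]
          rw [show (-(m:ℚ) + ((q:ℚ)+1)) = -(((m-(q+1):ℕ)):ℚ) by
            push_cast [Nat.cast_sub (show q+1 ≤ m by omega)]; ring]
          exact sig_root n' (m-(q+1)) (by omega)
        rw [hS0]; ring
  -- tail value
  have hBt : B.eval (-((n+k+q+1 : ℕ):ℚ)) = (-1:ℚ)^q * ((q.factorial * (n+k+q).choose q : ℕ) : ℚ) := by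
    rw [hB, eval_prod]
    have e1 : ∀ i ∈ range q, ((X : ℚ[X]) + C ((i:ℚ)+1)).eval (-((n+k+q+1 : ℕ):ℚ))
        = (-1) * (((n+k:ℕ):ℚ) + ((q-1-i : ℕ):ℚ) + 1) := by
      intro i hi
      rw [Finset.mem_range] at hi
      simp only [eval_add, eval_X, eval_C]
      push_cast [Nat.cast_sub (show i ≤ q-1 by omega), Nat.cast_sub (show 1 ≤ q by omega)]
      ring
    rw [Finset.prod_congr rfl e1, Finset.prod_mul_distrib, Finset.prod_const, Finset.card_range]
    rw [Finset.prod_range_reflect (fun i => ((n+k:ℕ):ℚ) + (i:ℚ) + 1) q]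
    rw [prod_cast (n+k) q, show n+k+q = (n+k)+q by omega]
  have hGt : G.eval (-((n+k+q+1 : ℕ):ℚ)) = (-1:ℚ)^k * (k.factorial : ℚ) := by
    rw [hG, eval_prod]
    have e1 : ∀ i ∈ range k, ((X : ℚ[X]) + C ((n:ℚ)+q+(i:ℚ)+1)).eval (-((n+k+q+1 : ℕ):ℚ))
        = (-1) * (((0:ℕ):ℚ) + ((k-1-i : ℕ):ℚ) + 1) := by
      intro i hi
      rw [Finset.mem_range] at hi
      simp only [eval_add, eval_X, eval_C]
      push_cast [Nat.cast_sub (show i ≤ k-1 by omega), Nat.cast_sub (show 1 ≤ k by omega)]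
      ring
    rw [Finset.prod_congr rfl e1, Finset.prod_mul_distrib, Finset.prod_const, Finset.card_range]
    rw [Finset.prod_range_reflect (fun i => ((0:ℕ):ℚ) + (i:ℚ) + 1) k]
    rw [prod_cast 0 k]
    simp
  have hSt : Sg.eval (-((n+k+q+1 : ℕ):ℚ)) = (stirling1 (n+k) k : ℚ) := by
    rw [hSg, eval_comp]
    simp only [eval_add, eval_X, eval_C]
    rw [show (-((n+k+q+1 : ℕ):ℚ) + ((q:ℚ)+1)) = -((k:ℕ):ℚ) - (n:ℕ) by push_cast; ring]
    rw [sig_eval_neg n k, show k+n = n+k by omega]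
  have hAt : A.eval (-((n+k+q+1 : ℕ):ℚ))
      = (-1:ℚ)^(q+k) * ((q.factorial * k.factorial : ℕ):ℚ) *
        (((n+k+q).choose q : ℚ) * (stirling1 (n+k) k : ℚ)) := by
    rw [hA, eval_mul, eval_mul, hBt, hGt, hSt]
    push_cast
    ring
  -- apply the kill identity
  have H := kill_sum' N A hdegA (p:ℤ)
  rw [show N + 1 = (p+1) + (n+k+q+1) by omega, Finset.sum_range_add] at H
  rw [Finset.sum_range_succ (fun x => (-1:ℚ)^(p+1+x) * (N.choose (p+1+x)) *
    A.eval (((p:ℤ):ℚ) - ((p+1+x:ℕ):ℚ))) (n+k+q)] at H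
  have htail0 : ∑ x ∈ range (n+k+q), ((-1:ℚ)^(p+1+x) * (N.choose (p+1+x)) *
      A.eval (((p:ℤ):ℚ) - ((p+1+x : ℕ):ℚ))) = 0 := by
    apply Finset.sum_eq_zero
    intro x hx
    rw [Finset.mem_range] at hx
    rw [show (((p:ℤ):ℚ) - ((p+1+x : ℕ):ℚ)) = -(((x+1:ℕ)):ℚ) by push_cast; ring]
    rw [hzero (x+1) (by omega) (by omega)]
    ring
  rw [htail0, zero_add] at H
  rw [show p+1+(n+k+q) = N by omega, Nat.choose_self] at H
  rw [show (((p:ℤ):ℚ) - ((N:ℕ):ℚ)) = -((n+k+q+1 : ℕ):ℚ) by rw [hN]; push_cast; ring, hAt] at H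
  -- now H : head + (-1)^N * 1 * ((-1)^(q+k) * ...) = 0
  have key : ∑ j ∈ range (p + 1),
      (-1 : ℚ) ^ (n + j) * ((j + q).choose q : ℚ) * ((n + k + q + j).choose k : ℚ) *
        (N.choose (p - j) : ℚ) * (stirling2 (j + n + q + 1) (j + q + 1) : ℚ)
      = ((n + k + q).choose q : ℚ) * (stirling1 (n + k) k : ℚ) := by
    have hfac : ((q.factorial * k.factorial : ℕ):ℚ) ≠ 0 := by
      positivity
    apply mul_left_cancel₀ hfac
    have hhead : ∑ i ∈ range (p+1), ((-1:ℚ)^i * (N.choose i) * A.eval (((p:ℤ):ℚ) - (i:ℚ)))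
        = ((q.factorial * k.factorial : ℕ):ℚ) * ((-1:ℚ)^(n+p) *
          ∑ j ∈ range (p + 1),
            (-1 : ℚ) ^ (n + j) * ((j + q).choose q : ℚ) * ((n + k + q + j).choose k : ℚ) *
            (N.choose (p - j) : ℚ) * (stirling2 (j + n + q + 1) (j + q + 1) : ℚ)) := by
      rw [Finset.mul_sum, Finset.mul_sum, ← Finset.sum_range_reflect]
      apply Finset.sum_congr rfl
      intro j hj
      rw [Finset.mem_range] at hj
      rw [show p + 1 - 1 - j = p - j by omega]
      rw [show (((p:ℤ):ℚ) - ((p-j:ℕ):ℚ)) = ((j:ℕ):ℚ) by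
        push_cast [Nat.cast_sub (show j ≤ p by omega)]; ring]
      rw [hAnat j]
      have hsgn : (-1:ℚ)^(p-j) = (-1:ℚ)^(n+p) * (-1:ℚ)^(n+j) := by
        rw [← pow_add, show n+p+(n+j) = (p-j) + 2*(n+j) by omega, pow_add, pow_mul]
        norm_num
      rw [hsgn]
      ring
    rw [hhead] at H
    have hsgn2 : (-1:ℚ)^N * (-1:ℚ)^(q+k) = (-1:ℚ)^(n+p) * (-1:ℚ) := by
      rw [← pow_add, show N+(q+k) = (n+p+1) + 2*(q+k) by omega, pow_add, pow_mul, pow_succ]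
      norm_num
    have h5 : (-1:ℚ)^N * ((1:ℕ):ℚ) * ((-1:ℚ)^(q+k) * ((q.factorial * k.factorial : ℕ):ℚ) *
        (((n+k+q).choose q : ℚ) * (stirling1 (n+k) k : ℚ)))
        = -((-1:ℚ)^(n+p) * (((q.factorial * k.factorial : ℕ):ℚ) *
          (((n+k+q).choose q : ℚ) * (stirling1 (n+k) k : ℚ)))) := by
      have e : (-1:ℚ)^N * ((1:ℕ):ℚ) * ((-1:ℚ)^(q+k) * ((q.factorial * k.factorial : ℕ):ℚ) *
          (((n+k+q).choose q : ℚ) * (stirling1 (n+k) k : ℚ)))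
          = ((-1:ℚ)^N * (-1:ℚ)^(q+k)) * (((q.factorial * k.factorial : ℕ):ℚ) *
            (((n+k+q).choose q : ℚ) * (stirling1 (n+k) k : ℚ))) := by
        push_cast; ring
      rw [e, hsgn2]; ring
    rw [h5] at H
    have hne : ((-1:ℚ)^(n+p)) ≠ 0 := pow_ne_zero _ (by norm_num)
    apply mul_left_cancel₀ hne
    linear_combination H
  exact_mod_cast key
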